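/- Let g: R^n → R ∪ {+∞} be g(x) = h(x) + r(x) with h m-strongly convex, differentiable with M-Lipschitz gradient, and r proper closed convex. Define the proximal gradient residual G(x) = x - prox_r^1(x - ∇h(x)), where prox_r^1(u) = argmin_v { (1/2)‖u - v‖² + r(v) }. Then for the unique minimizer x* of g and any x, ‖x - x*‖ ≤ ((M+1)/m)‖G(x)‖. -/

import Mathlib

open Filter Set

local notation "⟪" x ", " y "⟫" => @inner ℝ _ _ x y

lemma slope_tendsto_grad {n : ℕ} (f : EuclideanSpace ℝ (Fin n) → ℝ)
    (hf : Differentiable ℝ f) (x d : EuclideanSpace ℝ (Fin n)) :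
    Tendsto (fun t : ℝ => (f (x + t • d) - f x) / t) (nhdsWithin 0 (Set.Ioi 0))
      (nhds (⟪gradient f x, d⟫)) := by
  have hg : HasGradientAt f (gradient f x) x := (hf x).hasGradientAt
  have hfd := hg.hasFDerivAt
  have hline : HasDerivAt (fun t : ℝ => x + t • d) d 0 := by
    simpa using ((hasDerivAt_id (0 : ℝ)).smul_const d).const_add x
  have hcomp : HasDerivAt (fun t : ℝ => f (x + t • d)) (⟪gradient f x, d⟫) 0 := by
    have h0 : HasFDerivAt f (InnerProductSpace.toDual ℝ _ (gradient f x)) (x + (0 : ℝ) • d) := by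
      simpa using hfd
    simpa [Function.comp_def] using h0.comp_hasDerivAt 0 hline
  rw [hasDerivAt_iff_tendsto_slope] at hcomp
  have hmono : nhdsWithin (0 : ℝ) (Set.Ioi 0) ≤ nhdsWithin 0 {(0 : ℝ)}ᶜ :=
    nhdsWithin_mono 0 (fun t ht => ne_of_gt ht)
  refine (hcomp.mono_left hmono).congr fun t => ?_
  simp [slope_def_field]

set_option maxHeartbeats 1000000 in
theorem stmt15 {n : ℕ} (h r : EuclideanSpace ℝ (Fin n) → ℝ) (m M : ℝ) (hm : 0 < m)
    (hdiff : Differentiable ℝ h)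
    (hsc : ConvexOn ℝ Set.univ (fun x => h x - m / 2 * ‖x‖ ^ 2))
    (hM : ∀ x y, ‖gradient h x - gradient h y‖ ≤ M * ‖x - y‖)
    (hr : ConvexOn ℝ Set.univ r) (hrl : LowerSemicontinuous r)
    (p : EuclideanSpace ℝ (Fin n) → EuclideanSpace ℝ (Fin n))
    (hp : ∀ u v, 1 / 2 * ‖u - p u‖ ^ 2 + r (p u) ≤ 1 / 2 * ‖u - v‖ ^ 2 + r v)
    (xs : EuclideanSpace ℝ (Fin n))
    (hxs : IsMinOn (fun x => h x + r x) Set.univ xs) :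
    ∀ x, ‖x - xs‖ ≤ (M + 1) / m * ‖x - p (x - gradient h x)‖ := by
  have hIoc : ∀ᶠ t in nhdsWithin (0 : ℝ) (Set.Ioi 0), t ∈ Set.Ioc (0 : ℝ) 1 :=
    Ioc_mem_nhdsGT_of_mem (by constructor <;> norm_num)
  -- combination identity
  have hcomb : ∀ (a b : EuclideanSpace ℝ (Fin n)) (t : ℝ),
      a + t • (b - a) = (1 - t) • a + t • b := by
    intro a b t
    rw [sub_smul, one_smul, smul_sub]; abel
  -- strong convexity gradient inequality
  have sgi : ∀ x y : EuclideanSpace ℝ (Fin n),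
      ⟪gradient h x, y - x⟫ + m / 2 * ‖y - x‖ ^ 2 ≤ h y - h x := by
    intro x y
    have hslope : ∀ t ∈ Set.Ioc (0 : ℝ) 1,
        (h (x + t • (y - x)) - h x) / t + m / 2 * (1 - t) * ‖y - x‖ ^ 2 ≤ h y - h x := by
      intro t ht
      have ht0 : 0 < t := ht.1
      have hcvx := hsc.2 (Set.mem_univ x) (Set.mem_univ y)
        (by linarith [ht.2] : (0:ℝ) ≤ 1 - t) ht0.le (by ring)
      rw [← hcomb x y t] at hcvx
      simp only [smul_eq_mul] at hcvx
      have hnorm : ‖x + t • (y - x)‖ ^ 2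
          = ‖x‖ ^ 2 + 2 * (t * ⟪x, y - x⟫) + t ^ 2 * ‖y - x‖ ^ 2 := by
        rw [norm_add_sq_real, real_inner_smul_right, norm_smul, Real.norm_eq_abs, mul_pow,
          sq_abs]
      have hyy : y = x + (y - x) := by abel
      have hy2 : ‖y‖ ^ 2 = ‖x‖ ^ 2 + 2 * ⟪x, y - x⟫ + ‖y - x‖ ^ 2 := by
        conv_lhs => rw [hyy]
        exact norm_add_sq_real x (y - x)
      rw [hnorm, hy2] at hcvx
      rw [div_add' _ _ _ ht0.ne', div_le_iff₀ ht0]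
      nlinarith [hcvx]
    have htend : Tendsto (fun t : ℝ =>
          (h (x + t • (y - x)) - h x) / t + m / 2 * (1 - t) * ‖y - x‖ ^ 2)
        (nhdsWithin 0 (Set.Ioi 0))
        (nhds (⟪gradient h x, y - x⟫ + m / 2 * (1 - 0) * ‖y - x‖ ^ 2)) := by
      apply Tendsto.add (slope_tendsto_grad h hdiff x (y - x))
      have hc : Continuous fun t : ℝ => m / 2 * (1 - t) * ‖y - x‖ ^ 2 := by continuity
      exact (hc.tendsto 0).mono_left nhdsWithin_le_nhds
    have := le_of_tendsto htend (hIoc.mono fun t ht => hslope t ht)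
    simpa using this
  -- optimality variational inequality
  have vi2 : ∀ v : EuclideanSpace ℝ (Fin n), r xs - r v ≤ ⟪gradient h xs, v - xs⟫ := by
    intro v
    have hslope : ∀ t ∈ Set.Ioc (0 : ℝ) 1,
        r xs - r v ≤ (h (xs + t • (v - xs)) - h xs) / t := by
      intro t ht
      have ht0 : 0 < t := ht.1
      have hmin : h xs + r xs ≤ h (xs + t • (v - xs)) + r (xs + t • (v - xs)) :=
        isMinOn_iff.mp hxs _ (Set.mem_univ _)
      have hrconv := hr.2 (Set.mem_univ xs) (Set.mem_univ v)
        (by linarith [ht.2] : (0:ℝ) ≤ 1 - t) ht0.le (by ring)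
      rw [← hcomb xs v t] at hrconv
      simp only [smul_eq_mul] at hrconv
      rw [le_div_iff₀ ht0]
      nlinarith [hmin, hrconv]
    exact ge_of_tendsto (slope_tendsto_grad h hdiff xs (v - xs))
      (hIoc.mono fun t ht => hslope t ht)
  -- prox variational inequality
  have vi1 : ∀ u v : EuclideanSpace ℝ (Fin n),
      ⟪u - p u, v - p u⟫ ≤ r v - r (p u) := by
    intro u v
    have hslope : ∀ t ∈ Set.Ioc (0 : ℝ) 1,
        ⟪u - p u, v - p u⟫ - (r v - r (p u)) ≤ t * (‖v - p u‖ ^ 2 / 2) := by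
      intro t ht
      have ht0 : 0 < t := ht.1
      have hpt := hp u (p u + t • (v - p u))
      have hrconv := hr.2 (Set.mem_univ (p u)) (Set.mem_univ v)
        (by linarith [ht.2] : (0:ℝ) ≤ 1 - t) ht0.le (by ring)
      rw [← hcomb (p u) v t] at hrconv
      simp only [smul_eq_mul] at hrconv
      have hsplit : u - (p u + t • (v - p u)) = (u - p u) - t • (v - p u) := by abel
      have hnorm : ‖(u - p u) - t • (v - p u)‖ ^ 2
          = ‖u - p u‖ ^ 2 - 2 * (t * ⟪u - p u, v - p u⟫) + t ^ 2 * ‖v - p u‖ ^ 2 := by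
        rw [norm_sub_sq_real, real_inner_smul_right, norm_smul, Real.norm_eq_abs, mul_pow,
          sq_abs]
      rw [hsplit, hnorm] at hpt
      have h1 : t * 0 ≤ t * (t * (‖v - p u‖ ^ 2 / 2)
          - (⟪u - p u, v - p u⟫ - (r v - r (p u)))) := by
        rw [mul_zero]
        nlinarith [hpt, hrconv]
      have h2 := le_of_mul_le_mul_left h1 ht0
      nlinarith [h2, sq_nonneg t, ht.2]
    have htend : Tendsto (fun t : ℝ => t * (‖v - p u‖ ^ 2 / 2))
        (nhdsWithin (0:ℝ) (Set.Ioi 0)) (nhds (0 * (‖v - p u‖ ^ 2 / 2))) := by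
      have hc : Continuous fun t : ℝ => t * (‖v - p u‖ ^ 2 / 2) := by continuity
      exact (hc.tendsto 0).mono_left nhdsWithin_le_nhds
    have := ge_of_tendsto htend (hIoc.mono fun t ht => hslope t ht)
    simp only [zero_mul] at this
    linarith
  -- main argument
  intro x
  have h1 := vi1 (x - gradient h x) xs
  have h2 := vi2 (p (x - gradient h x))
  have hsx := sgi x xs
  have hsxs := sgi xs x
  have hMx := hM x xs
  set gx := gradient h x with hgx
  set gs := gradient h xs with hgs
  set y := p (x - gx) with hy
  -- strong monotonicity
  have e1 : ⟪gx, xs - x⟫ = -⟪gx, x - xs⟫ := by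
    rw [← inner_neg_right]; congr 1; abel
  have e2 : ‖xs - x‖ = ‖x - xs‖ := norm_sub_rev _ _
  rw [e1, e2] at hsx
  have smono : m * ‖x - xs‖ ^ 2 ≤ ⟪gx - gs, x - xs⟫ := by
    rw [inner_sub_left]; linarith
  -- combine vi1 and vi2
  have e3 : ⟪gs, y - xs⟫ = -⟪gs, xs - y⟫ := by
    rw [← inner_neg_right]; congr 1; abel
  rw [e3] at h2
  have hkey : ⟪x - gx - y, xs - y⟫ + ⟪gs, xs - y⟫ ≤ 0 := by linarith
  have hkey2 : ⟪(x - y) - (gx - gs), xs - y⟫ ≤ 0 := by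
    calc ⟪(x - y) - (gx - gs), xs - y⟫
        = ⟪x - gx - y, xs - y⟫ + ⟪gs, xs - y⟫ := by
          rw [← inner_add_left]; congr 1; abel
      _ ≤ 0 := hkey
  have e5 : xs - y = (x - y) - (x - xs) := by abel
  have hGG : ⟪x - y, x - y⟫ = ‖x - y‖ ^ 2 := real_inner_self_eq_norm_sq _
  have hA : ⟪(x - y) - (gx - gs), xs - y⟫ = ⟪x - y, xs - y⟫ - ⟪gx - gs, xs - y⟫ := by
    rw [inner_sub_left]
  have hB : ⟪x - y, xs - y⟫ = ⟪x - y, x - y⟫ - ⟪x - y, x - xs⟫ := by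
    rw [e5, inner_sub_right]
  have hC : ⟪gx - gs, xs - y⟫ = ⟪gx - gs, x - y⟫ - ⟪gx - gs, x - xs⟫ := by
    rw [e5, inner_sub_right]
  rw [hA, hB, hGG, hC] at hkey2
  -- bound the inner products
  have hb1 : ⟪x - y, x - xs⟫ ≤ ‖x - y‖ * ‖x - xs‖ := real_inner_le_norm _ _
  have hb2 : ⟪gx - gs, x - y⟫ ≤ M * ‖x - xs‖ * ‖x - y‖ :=
    le_trans (real_inner_le_norm _ _) (mul_le_mul_of_nonneg_right hMx (norm_nonneg _))
  have hineq : m * ‖x - xs‖ ^ 2 + ‖x - y‖ ^ 2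
      ≤ ‖x - y‖ * ‖x - xs‖ + M * ‖x - xs‖ * ‖x - y‖ := by linarith
  -- finish
  rcases eq_or_lt_of_le (norm_nonneg (x - xs)) with hD0 | hD0
  · rw [← hD0] at hineq
    have hg1 : ‖x - y‖ ≤ 0 := by nlinarith [norm_nonneg (x - y)]
    have hg0 : ‖x - y‖ = 0 := le_antisymm hg1 (norm_nonneg _)
    rw [← hD0, hg0, mul_zero]
  · rw [div_mul_eq_mul_div, le_div_iff₀ hm]
    nlinarith [norm_nonneg (x - y), mul_pos hD0 hD0]
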